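/- Σ_{j=1}^{J} n_j/N_{j−1} ≤ (1 + 1/α) + (1 + 1/α)·log(N_J), where log denotes the natural logarithm. -/

import Mathlib

/-- Let `α ≥ 1`, `J ≥ 1`, and let `n_0, …, n_J` be reals with `n_0 = 0` and
`0 ≤ n_j ≤ N_{j−1}/α` for `1 ≤ j ≤ J`, where `N_j = max 1 (∑_{i=0}^{j} n_i)`. Then
`∑_{j=1}^{J} n_j/N_{j−1} ≤ (1 + 1/α) + (1 + 1/α)·log(N_J)`. -/
theorem stmt_12 (α : ℝ) (hα : 1 ≤ α) (J : ℕ) (hJ : 1 ≤ J)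
    (n : ℕ → ℝ) (hn0 : n 0 = 0)
    (N : ℕ → ℝ) (hN : ∀ j, N j = max 1 (∑ i ∈ Finset.range (j + 1), n i))
    (hn : ∀ j, 1 ≤ j → j ≤ J → 0 ≤ n j ∧ n j ≤ N (j - 1) / α) :
    ∑ j ∈ Finset.Icc 1 J, n j / N (j - 1)
      ≤ (1 + 1 / α) + (1 + 1 / α) * Real.log (N J) := by
  have hα0 : (0:ℝ) < α := lt_of_lt_of_le one_pos hα
  set c : ℝ := 1 + 1/α with hc
  have hinva : 1/α ≤ 1 := by
    rw [div_le_one hα0]; exact hα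
  have hinva0 : 0 < 1/α := by positivity
  have hc1 : 1 ≤ c := by simp [hc]; linarith
  clear_value c
  have hNpos : ∀ k, (1:ℝ) ≤ N k := fun k => by rw [hN]; exact le_max_left _ _
  have key : ∀ k, k ≤ J → ∑ j ∈ Finset.Icc 1 k, n j / N (j-1)
      ≤ min (∑ i ∈ Finset.range (k+1), n i) c + c * Real.log (N k) := by
    intro k hk
    induction k with
    | zero =>
      have hN0 : N 0 = 1 := by
        rw [hN]; simp [hn0]
      simp [hN0, hn0, Real.log_one]
      positivity
    | succ k ih =>
      have hk' : k ≤ J := Nat.le_of_succ_le hk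
      have IH := ih hk'
      obtain ⟨hpos, hle⟩ := hn (k+1) (Nat.le_add_left 1 k) hk
      simp only [Nat.add_sub_cancel] at hle
      set Sk := ∑ i ∈ Finset.range (k+1), n i with hSk
      have hSk1 : ∑ i ∈ Finset.range (k+1+1), n i = Sk + n (k+1) :=
        Finset.sum_range_succ n (k+1)
      clear_value Sk
      have hsum : ∑ j ∈ Finset.Icc 1 (k+1), n j / N (j-1)
          = (∑ j ∈ Finset.Icc 1 k, n j / N (j-1)) + n (k+1) / N k := by
        rw [Finset.sum_Icc_succ_top (Nat.le_add_left 1 k)]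
        simp
      have hNk1pos : (0:ℝ) < N k := lt_of_lt_of_le one_pos (hNpos k)
      by_cases hS : 1 ≤ Sk
      · -- N k = Sk, use log bound
        have hNk : N k = Sk := by rw [hN, ← hSk]; exact max_eq_right hS
        have hNk1 : N (k+1) = Sk + n (k+1) := by
          rw [hN, hSk1]; exact max_eq_right (by linarith)
        set x := n (k+1) / N k with hx
        have hx0 : 0 ≤ x := div_nonneg hpos hNk1pos.le
        have hxa : x ≤ 1/α := by
          rw [hx, div_le_div_iff₀ hNk1pos hα0]
          calc n (k+1) * α ≤ (N k / α) * α := by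
                exact mul_le_mul_of_nonneg_right hle (le_of_lt hα0)
            _ = N k := by field_simp
            _ = 1 * N k := by ring
        have h1x : (0:ℝ) < 1 + x := by linarith
        have hratio : N (k+1) / N k = 1 + x := by
          rw [hNk1, hNk, hx, hNk]
          field_simp
        have hlogd : Real.log (N (k+1)) - Real.log (N k) = Real.log (1 + x) := by
          rw [← Real.log_div (by rw [hNk1]; linarith) (ne_of_gt hNk1pos), hratio]
        -- log(1+x) ≥ x/(1+x)
        have hlb : x / (1+x) ≤ Real.log (1+x) := by
          have h := Real.log_le_sub_one_of_pos (x := (1+x)⁻¹) (by positivity)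
          rw [Real.log_inv] at h
          have : Real.log (1+x) ≥ 1 - (1+x)⁻¹ := by linarith
          have he : 1 - (1+x)⁻¹ = x / (1+x) := by field_simp; ring
          linarith [he ▸ this]
        have hlog0 : 0 ≤ Real.log (1+x) := Real.log_nonneg (by linarith)
        have hkey : x ≤ c * Real.log (1+x) := by
          have h1 : x ≤ Real.log (1+x) * (1+x) := (div_le_iff₀ h1x).mp hlb
          have h2 : 1 + x ≤ c := by rw [hc]; linarith
          nlinarith
        have hmin : min Sk c ≤ min (Sk + n (k+1)) c :=
          min_le_min (by linarith) le_rfl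
        rw [hsum, hSk1]
        have : n (k+1) / N k ≤ c * (Real.log (N (k+1)) - Real.log (N k)) := by
          rw [hlogd]; exact hkey
        linarith
      · -- Sk < 1, N k = 1
        push_neg at hS
        have hNk : N k = 1 := by rw [hN, ← hSk]; exact max_eq_left hS.le
        have hle' : n (k+1) ≤ 1/α := by rw [hNk] at hle; linarith
        have IH' : ∑ j ∈ Finset.Icc 1 k, n j / N (j-1) ≤ Sk := by
          have hmin : min Sk c = Sk := min_eq_left (by linarith)
          rw [hmin, hNk, Real.log_one] at IH
          linarith
        have hminnew : min (Sk + n (k+1)) c = Sk + n (k+1) :=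
          min_eq_left (by rw [hc]; linarith)
        have hlog0 : 0 ≤ c * Real.log (N (k+1)) :=
          mul_nonneg (by linarith) (Real.log_nonneg (hNpos _))
        rw [hsum, hSk1, hminnew, hNk]
        simp only [div_one]
        linarith
  have h := key J le_rfl
  have hmin : min (∑ i ∈ Finset.range (J+1), n i) c ≤ c := min_le_right _ _
  rw [hc] at h hmin ⊢
  linarith
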